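/- Let X be a random n×p matrix such that X^T X is almost surely positive definite and both E[X^T X] and E[(X^T X)^{-1}] exist. Then E[(X^T X)^{-1}] - (E[X^T X])^{-1} is positive semidefinite. -/

import Mathlib

open MeasureTheory Matrix

section Aux

variable {Ω : Type*} [MeasurableSpace Ω] {μ : Measure Ω} {p : ℕ}

private lemma quad_eq (f : Matrix (Fin p) (Fin p) ℝ) (v w : Fin p → ℝ) :
    v ⬝ᵥ (f *ᵥ w) = ∑ i, ∑ j, v i * (f i j * w j) := by
  simp [dotProduct, mulVec, Finset.mul_sum]

private lemma quad_integrable (f : Ω → Matrix (Fin p) (Fin p) ℝ)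
    (hf : ∀ i j, Integrable (fun ω => f ω i j) μ) (v w : Fin p → ℝ) :
    Integrable (fun ω => v ⬝ᵥ (f ω *ᵥ w)) μ := by
  simp only [quad_eq]
  exact integrable_finset_sum _ fun i _ => integrable_finset_sum _ fun j _ =>
    (((hf i j).mul_const (w j)).const_mul (v i)).congr (by filter_upwards with ω; ring)

private lemma quad_integral (f : Ω → Matrix (Fin p) (Fin p) ℝ)
    (hf : ∀ i j, Integrable (fun ω => f ω i j) μ) (v w : Fin p → ℝ) :
    v ⬝ᵥ ((Matrix.of fun i j => ∫ ω, f ω i j ∂μ) *ᵥ w) = ∫ ω, v ⬝ᵥ (f ω *ᵥ w) ∂μ := by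
  have hsumm : ∀ i j, Integrable (fun ω => v i * (f ω i j * w j)) μ := fun i j =>
    (((hf i j).mul_const (w j)).const_mul (v i)).congr (by filter_upwards with ω; ring)
  simp only [quad_eq, Matrix.of_apply]
  rw [integral_finset_sum _ (fun i _ => integrable_finset_sum _ fun j _ => hsumm i j)]
  refine Finset.sum_congr rfl fun i _ => ?_
  rw [integral_finset_sum _ (fun j _ => hsumm i j)]
  refine Finset.sum_congr rfl fun j _ => ?_
  have h : (fun ω => v i * (f ω i j * w j)) = fun ω => (v i * w j) * f ω i j :=
    funext fun ω => by ring
  rw [h, integral_const_mul]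
  ring

private lemma pointwise_ineq (A : Matrix (Fin p) (Fin p) ℝ) (hA : A.PosDef)
    (v w : Fin p → ℝ) : 2 * (v ⬝ᵥ w) - w ⬝ᵥ (A *ᵥ w) ≤ v ⬝ᵥ (A⁻¹ *ᵥ v) := by
  have hAs : Aᵀ = A := hA.isHermitian
  set u : Fin p → ℝ := A⁻¹ *ᵥ v with hu
  have hAu : A *ᵥ u = v := by
    rw [hu, mulVec_mulVec, A.mul_nonsing_inv hA.det_pos.ne'.isUnit, one_mulVec]
  have hvecMul : u ᵥ* A = v := by
    have h := congrArg (fun B => B *ᵥ u) hAs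
    simp only [mulVec_transpose] at h
    rw [h, hAu]
  have key := hA.posSemidef.dotProduct_mulVec_nonneg (u - w)
  simp only [star_trivial, mulVec_sub, dotProduct_sub, sub_dotProduct] at key
  rw [hAu, dotProduct_mulVec u A w, hvecMul] at key
  have h1 : u ⬝ᵥ v = v ⬝ᵥ u := dotProduct_comm _ _
  have h2 : w ⬝ᵥ v = v ⬝ᵥ w := dotProduct_comm _ _
  linarith

end Aux

/-- Groves–Rothenberg (1969): for a random matrix `X` with `XᵀX` a.s. positive definite
and integrable entrywise expectations, `E[(XᵀX)⁻¹] - (E[XᵀX])⁻¹` is positive semidefinite. -/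
theorem groves_rothenberg
    {Ω : Type*} [MeasurableSpace Ω] (μ : Measure Ω) [IsProbabilityMeasure μ]
    {n p : ℕ} (X : Ω → Matrix (Fin n) (Fin p) ℝ)
    (hpos : ∀ᵐ ω ∂μ, ((X ω)ᵀ * X ω).PosDef)
    (hint1 : ∀ i j, Integrable (fun ω => ((X ω)ᵀ * X ω) i j) μ)
    (hint2 : ∀ i j, Integrable (fun ω => (((X ω)ᵀ * X ω)⁻¹) i j) μ) :
    ((Matrix.of fun i j => ∫ ω, (((X ω)ᵀ * X ω)⁻¹) i j ∂μ) -
      (Matrix.of fun i j => ∫ ω, ((X ω)ᵀ * X ω) i j ∂μ)⁻¹).PosSemidef := by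
  set A : Ω → Matrix (Fin p) (Fin p) ℝ := fun ω => (X ω)ᵀ * X ω with hA
  have hAsym : ∀ ω, (A ω)ᵀ = A ω := fun ω => by simp [hA, transpose_mul]
  have hAinvsym : ∀ ω, ((A ω)⁻¹)ᵀ = (A ω)⁻¹ := fun ω => by
    rw [transpose_nonsing_inv, hAsym]
  have hentry : ∀ ω (i j : Fin p), A ω j i = A ω i j := fun ω i j => by
    have h := congrFun (congrFun (hAsym ω) i) j
    simpa using h
  have hentryinv : ∀ ω (i j : Fin p), (A ω)⁻¹ j i = (A ω)⁻¹ i j := fun ω i j => by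
    have h := congrFun (congrFun (hAinvsym ω) i) j
    simpa using h
  set M : Matrix (Fin p) (Fin p) ℝ := Matrix.of fun i j => ∫ ω, A ω i j ∂μ with hM
  set E1 : Matrix (Fin p) (Fin p) ℝ := Matrix.of fun i j => ∫ ω, (A ω)⁻¹ i j ∂μ with hE1
  have hMsym : Mᵀ = M := by
    ext i j
    simp only [hM, transpose_apply, Matrix.of_apply]
    congr 1
    funext ω
    exact hentry ω i j
  have hE1sym : E1ᵀ = E1 := by
    ext i j
    simp only [hE1, transpose_apply, Matrix.of_apply]
    congr 1
    funext ω
    exact hentryinv ω i j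
  have hne : (MeasureTheory.ae μ).NeBot := ae_neBot.2 (IsProbabilityMeasure.ne_zero μ)
  -- M is positive definite
  have hMpos : M.PosDef := by
    refine posDef_iff_dotProduct_mulVec.mpr ⟨hMsym, fun v hv => ?_⟩
    simp only [star_trivial]
    rw [hM, quad_integral A hint1 v v]
    have hnn : 0 ≤ᵐ[μ] fun ω => v ⬝ᵥ (A ω *ᵥ v) := by
      filter_upwards [hpos] with ω hω
      exact hω.posSemidef.dotProduct_mulVec_nonneg v
    rw [MeasureTheory.integral_pos_iff_support_of_nonneg_ae hnn (quad_integrable A hint1 v v),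
      pos_iff_ne_zero]
    intro h0
    have hz : ∀ᵐ ω ∂μ, v ⬝ᵥ (A ω *ᵥ v) = 0 := by
      rw [ae_iff]
      simpa [Function.support] using h0
    obtain ⟨ω, hω1, hω2⟩ := (hpos.and hz).exists
    exact (hω1.dotProduct_mulVec_pos hv).ne' hω2
  have hMdet : IsUnit M.det := hMpos.det_pos.ne'.isUnit
  refine posSemidef_iff_dotProduct_mulVec.mpr ⟨?_, fun v => ?_⟩
  · show (E1 - M⁻¹)ᴴ = E1 - M⁻¹
    simp only [conjTranspose_sub]
    rw [show E1ᴴ = E1ᵀ from rfl, show (M⁻¹)ᴴ = (M⁻¹)ᵀ from rfl,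
      transpose_nonsing_inv, hMsym, hE1sym]
  · simp only [star_trivial, sub_mulVec, dotProduct_sub, sub_nonneg]
    set w : Fin p → ℝ := M⁻¹ *ᵥ v with hw
    have hE1v : v ⬝ᵥ (E1 *ᵥ v) = ∫ ω, v ⬝ᵥ ((A ω)⁻¹ *ᵥ v) ∂μ := quad_integral _ hint2 v v
    have hMw : w ⬝ᵥ (M *ᵥ w) = ∫ ω, w ⬝ᵥ (A ω *ᵥ w) ∂μ := quad_integral _ hint1 w w
    have hkey : ∫ ω, (2 * (v ⬝ᵥ w) - w ⬝ᵥ (A ω *ᵥ w)) ∂μ ≤ ∫ ω, v ⬝ᵥ ((A ω)⁻¹ *ᵥ v) ∂μ := by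
      refine integral_mono_ae ((integrable_const _).sub (quad_integrable A hint1 w w))
        (quad_integrable _ hint2 v v) ?_
      filter_upwards [hpos] with ω hω
      exact pointwise_ineq (A ω) hω v w
    rw [integral_sub (integrable_const _) (quad_integrable A hint1 w w),
      integral_const, probReal_univ, smul_eq_mul, one_mul,
      ← hMw] at hkey
    have hMww : w ⬝ᵥ (M *ᵥ w) = v ⬝ᵥ (M⁻¹ *ᵥ v) := by
      rw [hw, mulVec_mulVec, M.mul_nonsing_inv hMdet, one_mulVec,
        dotProduct_mulVec v M⁻¹ v, ← mulVec_transpose, transpose_nonsing_inv, hMsym]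
    have hvw : v ⬝ᵥ w = v ⬝ᵥ (M⁻¹ *ᵥ v) := rfl
    rw [hE1v]
    rw [hMww, hvw] at hkey
    linarith
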